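/- Let f be the generalized inverse Gaussian density with parameters ν, a > 0, b > 0, and π_k = ∫₀^∞ (x^k e^{-x}/k!) f(x) dx. Then π_k ~ ((a/b)^{ν/2} / (2 (1+a/2)^ν K_ν(√(ab)))) · k^{ν-1} e^{-k log(1+a/2)} as k → ∞. -/

import Mathlib

open Filter Topology MeasureTheory Set

lemma integrableOn_kernel {s c d : ℝ} (hc : 0 < c) (hd : 0 < d) :
    IntegrableOn (fun x : ℝ => x ^ s * Real.exp (-(c * x)) * Real.exp (-(d / x)))
      (Set.Ioi 0) := by
  obtain ⟨n, hn⟩ : ∃ n : ℕ, -s ≤ n := exists_nat_ge (-s)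
  have hmeas : AEStronglyMeasurable
      (fun x : ℝ => x ^ s * Real.exp (-(c * x)) * Real.exp (-(d / x)))
      (volume.restrict (Set.Ioi 0)) := by
    apply ContinuousOn.aestronglyMeasurable ?_ measurableSet_Ioi
    apply ContinuousOn.mul
    · apply ContinuousOn.mul
      · exact fun x hx => (Real.continuousAt_rpow_const x s (Or.inl (ne_of_gt hx))).continuousWithinAt
      · exact (Real.continuous_exp.comp (continuous_const.mul continuous_id).neg).continuousOn
    · exact Real.continuous_exp.comp_continuousOn
        ((continuousOn_const.div continuousOn_id (fun x hx => ne_of_gt hx)).neg)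
  have hint : IntegrableOn (fun x : ℝ => ((n.factorial : ℝ) / d ^ n) * (x ^ (s + n) * Real.exp (-(c * x))))
      (Set.Ioi 0) := by
    have := (integrableOn_rpow_mul_exp_neg_mul_rpow (p := 1) (s := s + n) (b := c)
      (by linarith) zero_lt_one hc)
    simpa [Real.rpow_one, neg_mul, IntegrableOn] using this.const_mul ((n.factorial : ℝ) / d ^ n)
  refine Integrable.mono' hint hmeas ?_
  rw [ae_restrict_iff' measurableSet_Ioi]
  filter_upwards with x
  intro hx
  have hx0 : (0:ℝ) < x := hx
  have h1 : Real.exp (-(d / x)) ≤ (n.factorial : ℝ) * (x / d) ^ n := by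
    have h2 : (d / x) ^ n / (n.factorial:ℝ) ≤ Real.exp (d / x) :=
      Real.pow_div_factorial_le_exp _ (le_of_lt (div_pos hd hx0)) n
    have hdx : (0:ℝ) < (d / x) ^ n / (n.factorial:ℝ) := by positivity
    rw [Real.exp_neg]
    refine (inv_anti₀ hdx h2).trans (le_of_eq ?_)
    rw [div_pow, div_pow]
    field_simp
  have hxs : (0:ℝ) ≤ x ^ s := le_of_lt (Real.rpow_pos_of_pos hx0 s)
  rw [Real.norm_eq_abs, abs_of_nonneg (by positivity)]
  have key : x ^ s * Real.exp (-(c * x)) * Real.exp (-(d / x))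
      ≤ x ^ s * Real.exp (-(c * x)) * ((n.factorial : ℝ) * (x / d) ^ n) := by
    apply mul_le_mul_of_nonneg_left h1 (by positivity)
  refine key.trans (le_of_eq ?_)
  rw [Real.rpow_add hx0, Real.rpow_natCast, div_pow]
  field_simp

lemma prod_eq_gamma {t : ℝ} (ht : 0 < t) (k : ℕ) :
    ∏ j ∈ Finset.range (k + 1), (t + j) = Real.Gamma (t + k + 1) / Real.Gamma t := by
  induction k with
  | zero =>
      simp only [zero_add, Finset.prod_range_one, Nat.cast_zero, add_zero]
      rw [Real.Gamma_add_one ht.ne']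
      field_simp [(Real.Gamma_pos_of_pos ht).ne']
  | succ k ih =>
      rw [Finset.prod_range_succ, ih]
      have h1 : t + (k : ℝ) + 1 ≠ 0 := by positivity
      have h2 : Real.Gamma (t + (k+1 : ℕ) + 1) = (t + k + 1) * Real.Gamma (t + k + 1) := by
        rw [show t + ((k+1 : ℕ) : ℝ) + 1 = (t + k + 1) + 1 by push_cast; ring,
          Real.Gamma_add_one h1]
      rw [h2]
      push_cast
      ring

lemma tendsto_ratio_pos {t : ℝ} (ht : 0 < t) :
    Tendsto (fun k : ℕ => (k : ℝ) ^ t * k.factorial / Real.Gamma (t + k + 1)) atTop (𝓝 1) := by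
  have h := (Real.GammaSeq_tendsto_Gamma t).div_const (Real.Gamma t)
  rw [div_self (Real.Gamma_pos_of_pos ht).ne'] at h
  refine h.congr (fun k => ?_)
  rw [Real.GammaSeq, prod_eq_gamma ht k]
  have hG : Real.Gamma (t + k + 1) ≠ 0 := (Real.Gamma_pos_of_pos (by positivity)).ne'
  field_simp

lemma tendsto_gamma_ratio (t : ℝ) :
    Tendsto (fun k : ℕ => Real.Gamma ((k : ℝ) + 1 + t) / ((k : ℝ) ^ t * k.factorial))
      atTop (𝓝 1) := by
  obtain ⟨m, hm⟩ : ∃ m : ℕ, -t < m := exists_nat_gt (-t)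
  have htm : 0 < t + m + 1 := by linarith
  have gam_add : ∀ (m : ℕ) (x : ℝ), 0 < x →
      Real.Gamma (x + m) = Real.Gamma x * ∏ j ∈ Finset.range m, (x + j) := by
    intro m
    induction m with
    | zero => intro x hx; simp
    | succ m ih =>
        intro x hx
        rw [show x + ((m+1 : ℕ) : ℝ) = (x + m) + 1 by push_cast; ring,
          Real.Gamma_add_one (by positivity), ih x hx, Finset.prod_range_succ]
        ring
  have h1 : Tendsto (fun k : ℕ =>
      Real.Gamma ((k:ℝ) + 1 + (t + m + 1)) / ((k:ℝ) ^ (t + m + 1) * k.factorial))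
      atTop (𝓝 1) := by
    have h := (tendsto_ratio_pos htm).inv₀ one_ne_zero
    rw [inv_one] at h
    refine h.congr (fun k => ?_)
    rw [show t + (m:ℝ) + 1 + k + 1 = (k:ℝ) + 1 + (t + m + 1) by ring, inv_div]
  have h2 : Tendsto (fun k : ℕ =>
      ∏ j ∈ Finset.range (m + 1), ((k:ℝ) / ((k:ℝ) + 1 + t + j))) atTop (𝓝 1) := by
    have hgoal : Tendsto (fun k : ℕ =>
        ∏ j ∈ Finset.range (m + 1), ((k:ℝ) / ((k:ℝ) + 1 + t + j))) atTop
        (𝓝 (∏ j ∈ Finset.range (m + 1), (1:ℝ))) := by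
      apply tendsto_finset_prod
      intro j _
      have hden : Tendsto (fun k : ℕ => 1 + (1 + t + j) / (k:ℝ)) atTop (𝓝 (1 + 0)) :=
        tendsto_const_nhds.add (tendsto_const_nhds.div_atTop tendsto_natCast_atTop_atTop)
      rw [add_zero] at hden
      have hinv := hden.inv₀ one_ne_zero
      rw [inv_one] at hinv
      refine hinv.congr' ?_
      filter_upwards [eventually_gt_atTop (⌈|1 + t + (j:ℝ)|⌉₊)] with k hk
      have hk0 : (0:ℝ) < k := by
        exact_mod_cast Nat.lt_of_le_of_lt (Nat.zero_le _) hk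
      have hk1 : |1 + t + (j:ℝ)| < k := lt_of_le_of_lt (Nat.le_ceil _) (by exact_mod_cast hk)
      have habs := neg_abs_le (1 + t + (j:ℝ))
      have hkden : (0:ℝ) < (k:ℝ) + 1 + t + j := by linarith
      have heq : 1 + (1 + t + (j:ℝ)) / (k:ℝ) = ((k:ℝ) + 1 + t + j) / (k:ℝ) := by
        field_simp
        ring
      rw [heq, inv_div]
    simpa using hgoal
  have key := h1.mul h2
  rw [mul_one] at key
  refine key.congr' ?_
  filter_upwards [eventually_gt_atTop (⌈|t|⌉₊)] with k hk
  have hk0 : (0:ℝ) < k := by exact_mod_cast Nat.lt_of_le_of_lt (Nat.zero_le _) hk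
  have habs : |t| < (k:ℝ) := (Nat.le_ceil _).trans_lt (by exact_mod_cast hk)
  have hx : (0:ℝ) < (k:ℝ) + 1 + t := by have := neg_abs_le t; linarith
  have hprod : 0 < ∏ j ∈ Finset.range (m+1), ((k:ℝ) + 1 + t + j) :=
    Finset.prod_pos (fun j _ => by positivity)
  have hgam : Real.Gamma ((k:ℝ) + 1 + (t + m + 1))
      = Real.Gamma ((k:ℝ) + 1 + t) * ∏ j ∈ Finset.range (m+1), ((k:ℝ) + 1 + t + j) := by
    have h := gam_add (m+1) ((k:ℝ) + 1 + t) hx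
    rw [show (k:ℝ) + 1 + (t + m + 1) = (k:ℝ) + 1 + t + ((m+1 : ℕ) : ℝ) by push_cast; ring]
    exact h
  have hpow : (k:ℝ) ^ (t + m + 1) = (k:ℝ) ^ t * (k:ℝ) ^ (m+1) := by
    rw [← Real.rpow_natCast (k:ℝ) (m+1), ← Real.rpow_add hk0]
    congr 1
    push_cast
    ring
  rw [hgam, hpow, Finset.prod_div_distrib, Finset.prod_const, Finset.card_range]
  have hfact : (k.factorial : ℝ) ≠ 0 := by positivity
  have hkt : (k:ℝ) ^ t ≠ 0 := (Real.rpow_pos_of_pos hk0 t).ne'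
  have hG : Real.Gamma ((k:ℝ) + 1 + t) ≠ 0 := (Real.Gamma_pos_of_pos hx).ne'
  field_simp
/-- Modified Bessel function of the second kind, via the integral representation
`K_ν(x) = (1/2) ∫₀^∞ t^{ν-1} exp(-(x/2)(t + 1/t)) dt` (valid for `x > 0`). -/
noncomputable def besselK (ν x : ℝ) : ℝ :=
  (1 / 2) * ∫ t in Set.Ioi (0 : ℝ), t ^ (ν - 1) * Real.exp (-(x / 2) * (t + 1 / t))

lemma besselK_pos {ν x : ℝ} (hx : 0 < x) : 0 < besselK ν x := by
  have hx2 : 0 < x / 2 := by linarith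
  have hcongr : ∀ t ∈ Set.Ioi (0:ℝ), t ^ (ν - 1) * Real.exp (-(x / 2) * (t + 1 / t))
      = t ^ (ν - 1) * Real.exp (-((x/2) * t)) * Real.exp (-((x/2) / t)) := by
    intro t ht
    rw [mul_assoc, ← Real.exp_add]
    congr 1
    have : (t:ℝ) ≠ 0 := ne_of_gt ht
    field_simp
    ring
  rw [besselK, setIntegral_congr_fun measurableSet_Ioi hcongr]
  have hint := integrableOn_kernel (s := ν - 1) hx2 hx2
  apply mul_pos (by norm_num)
  rw [setIntegral_pos_iff_support_of_nonneg_ae]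
  · have hsub : Set.Ioi (0:ℝ) ⊆ Function.support
        (fun t : ℝ => t ^ (ν - 1) * Real.exp (-((x/2) * t)) * Real.exp (-((x/2) / t))) := by
      intro t ht
      have ht0 : (0:ℝ) < t := ht
      have hpos : 0 < t ^ (ν - 1) * Real.exp (-((x/2) * t)) * Real.exp (-((x/2) / t)) := by
        have := Real.rpow_pos_of_pos ht0 (ν - 1)
        positivity
      exact ne_of_gt hpos
    refine lt_of_lt_of_le ?_ (measure_mono (subset_inter hsub Subset.rfl))
    simp [Real.volume_Ioi]
  · rw [EventuallyLE, ae_restrict_iff' measurableSet_Ioi]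
    filter_upwards with t ht
    have ht0 : (0:ℝ) < t := ht
    have := Real.rpow_pos_of_pos ht0 (ν - 1)
    positivity
  · exact hint
/-- Asymptotics of the mixed Poisson (Sichel) probabilities with GIG mixing density:
a power law with exponential cut-off. -/
theorem mixed_poisson_gig_asymptotics
    (ν a b : ℝ) (ha : 0 < a) (hb : 0 < b) :
    Tendsto (fun k : ℕ =>
      (∫ x in Set.Ioi (0 : ℝ),
          x ^ k * Real.exp (-x) / (Nat.factorial k) *
            ((a / b) ^ (ν / 2) / (2 * besselK ν (Real.sqrt (a * b))) * x ^ (ν - 1) *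
              Real.exp (-(a * x + b / x) / 2))) /
        ((a / b) ^ (ν / 2) / (2 * (1 + a / 2) ^ ν * besselK ν (Real.sqrt (a * b))) *
          ((k : ℝ) ^ (ν - 1) * Real.exp (-(k : ℝ) * Real.log (1 + a / 2)))))
      atTop (𝓝 1) := by
  have hc0 : (0:ℝ) < 1 + a / 2 := by linarith
  set c : ℝ := 1 + a / 2 with hc_def
  have hK : 0 < besselK ν (Real.sqrt (a * b)) := besselK_pos (Real.sqrt_pos.mpr (mul_pos ha hb))
  set K : ℝ := besselK ν (Real.sqrt (a * b)) with hK_def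
  have hCst : (0:ℝ) < (a / b) ^ (ν / 2) := Real.rpow_pos_of_pos (div_pos ha hb) _
  set Cst : ℝ := (a / b) ^ (ν / 2) with hCst_def
  set J : ℕ → ℝ := fun k => ∫ x in Set.Ioi (0:ℝ),
      x ^ ((k:ℝ) + ν - 1) * Real.exp (-(c * x)) * Real.exp (-((b/2) / x)) with hJ_def
  -- numerator rewrite
  have hnum : ∀ k : ℕ, (∫ x in Set.Ioi (0 : ℝ),
      x ^ k * Real.exp (-x) / (Nat.factorial k) *
        (Cst / (2 * K) * x ^ (ν - 1) * Real.exp (-(a * x + b / x) / 2)))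
      = Cst / (2 * K) / (Nat.factorial k) * J k := by
    intro k
    rw [hJ_def]
    simp only
    rw [← integral_const_mul]
    apply setIntegral_congr_fun measurableSet_Ioi
    intro x hx
    have hx0 : (0:ℝ) < x := hx
    have e1 : Real.exp (-x) * Real.exp (-(a * x + b / x) / 2)
        = Real.exp (-(c * x)) * Real.exp (-((b/2) / x)) := by
      rw [← Real.exp_add, ← Real.exp_add]
      congr 1
      rw [hc_def]
      field_simp
      ring
    have e2 : x ^ ((k:ℝ) + ν - 1) = x ^ (k:ℕ) * x ^ (ν - 1) := by
      rw [← Real.rpow_natCast x k, ← Real.rpow_add hx0]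
      congr 1
      ring
    dsimp only
    rw [e2, mul_assoc (x ^ k * x ^ (ν - 1)), ← e1]
    ring
  -- denominator rewrite
  have hden : ∀ k : ℕ, Real.exp (-(k : ℝ) * Real.log c) = c ^ (-(k:ℝ)) := by
    intro k
    rw [Real.rpow_def_of_pos hc0, mul_comm]
  -- Gamma ratio factor
  have hG : Tendsto (fun k : ℕ =>
      Real.Gamma ((k:ℝ) + ν) / ((k:ℝ) ^ (ν - 1) * k.factorial)) atTop (𝓝 1) := by
    refine (tendsto_gamma_ratio (ν - 1)).congr (fun k => ?_)
    rw [show (k:ℝ) + 1 + (ν - 1) = (k:ℝ) + ν by ring]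
  have hIexp : ∀ s : ℝ, -1 < s →
      IntegrableOn (fun x : ℝ => x ^ s * Real.exp (-(c * x))) (Set.Ioi 0) := by
    intro s hs
    have := integrableOn_rpow_mul_exp_neg_mul_rpow (p := 1) hs zero_lt_one hc0
    simpa [Real.rpow_one, neg_mul] using this
  -- bounds on the normalized integral
  have hbound : ∀ k : ℕ, 2 - ν < (k:ℝ) →
      (1 - (b * c / 2) / ((k:ℝ) + ν - 1)
        ≤ c ^ ((k:ℝ) + ν) * J k / Real.Gamma ((k:ℝ) + ν)) ∧
      c ^ ((k:ℝ) + ν) * J k / Real.Gamma ((k:ℝ) + ν) ≤ 1 := by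
    intro k hk
    set p : ℝ := (k:ℝ) + ν with hp_def
    have hp2 : 2 < p := by rw [hp_def]; linarith
    have hp0 : 0 < p := by linarith
    have hp1 : 0 < p - 1 := by linarith
    have hGammap : 0 < Real.Gamma p := Real.Gamma_pos_of_pos hp0
    have hGammap1 : 0 < Real.Gamma (p - 1) := Real.Gamma_pos_of_pos hp1
    have hgrec : Real.Gamma p = (p - 1) * Real.Gamma (p - 1) := by
      rw [show p = (p - 1) + 1 by ring]
      rw [Real.Gamma_add_one hp1.ne']
      ring_nf
    have hker : IntegrableOn (fun x : ℝ =>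
        x ^ (p - 1) * Real.exp (-(c * x)) * Real.exp (-((b/2) / x))) (Set.Ioi 0) :=
      integrableOn_kernel hc0 (by linarith)
    have hup : J k ≤ (1 / c) ^ p * Real.Gamma p := by
      have hmono : J k ≤ ∫ x in Set.Ioi (0:ℝ), x ^ (p - 1) * Real.exp (-(c * x)) := by
        rw [hJ_def]
        simp only
        apply setIntegral_mono_on hker (hIexp (p - 1) (by linarith)) measurableSet_Ioi
        intro x hx
        have hx0 : (0:ℝ) < x := hx
        have h1 : Real.exp (-((b/2) / x)) ≤ 1 :=
          Real.exp_le_one_iff.mpr (neg_nonpos.mpr (by positivity))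
        calc x ^ (p - 1) * Real.exp (-(c * x)) * Real.exp (-((b/2) / x))
            ≤ x ^ (p - 1) * Real.exp (-(c * x)) * 1 := by
              apply mul_le_mul_of_nonneg_left h1
              positivity
          _ = x ^ (p - 1) * Real.exp (-(c * x)) := by ring
      rwa [Real.integral_rpow_mul_exp_neg_mul_Ioi hp0 hc0] at hmono
    have hlow : (1 / c) ^ p * Real.Gamma p
        - (b/2) * ((1 / c) ^ (p - 1) * Real.Gamma (p - 1)) ≤ J k := by
      have hint2 : IntegrableOn (fun x : ℝ => x ^ (p - 2) * Real.exp (-(c * x)))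
          (Set.Ioi 0) := hIexp (p - 2) (by linarith)
      have hint1 : IntegrableOn (fun x : ℝ => x ^ (p - 1) * Real.exp (-(c * x)))
          (Set.Ioi 0) := hIexp (p - 1) (by linarith)
      have hmono : ∫ x in Set.Ioi (0:ℝ),
          (x ^ (p - 1) * Real.exp (-(c * x)) - (b/2) * (x ^ (p - 2) * Real.exp (-(c * x))))
          ≤ J k := by
        rw [hJ_def]
        simp only
        apply setIntegral_mono_on (hint1.sub (hint2.const_mul (b/2))) hker measurableSet_Ioi
        intro x hx
        have hx0 : (0:ℝ) < x := hx
        have h1 : 1 - (b/2) / x ≤ Real.exp (-((b/2) / x)) := by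
          have := Real.add_one_le_exp (-((b/2) / x))
          linarith
        have e3 : x ^ (p - 2) = x ^ (p - 1) / x := by
          rw [show p - 2 = (p - 1) - 1 by ring, Real.rpow_sub_one hx0.ne']
        calc x ^ (p - 1) * Real.exp (-(c * x)) - (b/2) * (x ^ (p - 2) * Real.exp (-(c * x)))
            = x ^ (p - 1) * Real.exp (-(c * x)) * (1 - (b/2) / x) := by
              rw [e3]; field_simp
          _ ≤ x ^ (p - 1) * Real.exp (-(c * x)) * Real.exp (-((b/2) / x)) := by
              apply mul_le_mul_of_nonneg_left h1
              positivity
      rw [integral_sub hint1 (hint2.const_mul (b/2)), integral_const_mul,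
        Real.integral_rpow_mul_exp_neg_mul_Ioi hp0 hc0] at hmono
      have heq2 : (∫ x in Set.Ioi (0:ℝ), x ^ (p - 2) * Real.exp (-(c * x)))
          = (1 / c) ^ (p - 1) * Real.Gamma (p - 1) := by
        rw [show p - 2 = (p - 1) - 1 by ring]
        exact Real.integral_rpow_mul_exp_neg_mul_Ioi hp1 hc0
      rw [heq2] at hmono
      exact hmono
    have e1 : c ^ p * (1 / c) ^ p = 1 := by
      rw [← Real.mul_rpow (le_of_lt hc0) (by positivity), mul_one_div, div_self hc0.ne',
        Real.one_rpow]
    have e2 : c ^ p * (1 / c) ^ (p - 1) = c := by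
      rw [Real.div_rpow zero_le_one hc0.le, Real.one_rpow, mul_one_div,
        ← Real.rpow_sub hc0, show p - (p - 1) = 1 by ring, Real.rpow_one]
    have hcp : 0 < c ^ p := Real.rpow_pos_of_pos hc0 p
    constructor
    · rw [le_div_iff₀ hGammap]
      have hstep := mul_le_mul_of_nonneg_left hlow hcp.le
      have hr : c ^ p * ((1 / c) ^ p * Real.Gamma p
          - (b/2) * ((1 / c) ^ (p - 1) * Real.Gamma (p - 1)))
          = Real.Gamma p - (b * c / 2) * Real.Gamma (p - 1) := by
        rw [mul_sub, ← mul_assoc, e1, one_mul,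
          show c ^ p * ((b/2) * ((1 / c) ^ (p - 1) * Real.Gamma (p - 1)))
            = (b/2) * (c ^ p * (1 / c) ^ (p - 1)) * Real.Gamma (p - 1) by ring, e2]
        ring
      have hl : (1 - (b * c / 2) / (p - 1)) * Real.Gamma p
          = Real.Gamma p - (b * c / 2) * Real.Gamma (p - 1) := by
        rw [hgrec]
        field_simp
      rw [hl]
      rw [hr] at hstep
      linarith
    · rw [div_le_one hGammap]
      calc c ^ p * J k ≤ c ^ p * ((1 / c) ^ p * Real.Gamma p) :=
            mul_le_mul_of_nonneg_left hup hcp.le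
        _ = Real.Gamma p := by rw [← mul_assoc, e1, one_mul]
  -- the squeeze
  have hL : Tendsto (fun k : ℕ => 1 - (b * c / 2) / ((k:ℝ) + ν - 1)) atTop (𝓝 1) := by
    have h0 : Tendsto (fun k : ℕ => (b * c / 2) / ((k:ℝ) + ν - 1)) atTop (𝓝 0) := by
      apply Tendsto.div_atTop tendsto_const_nhds
      refine (tendsto_atTop_add_const_right atTop (ν - 1) tendsto_natCast_atTop_atTop).congr
        (fun k => ?_)
      ring
    have := (tendsto_const_nhds (x := (1:ℝ))).sub h0
    simpa using this
  have hnat : Tendsto (fun k : ℕ => (k:ℝ)) atTop atTop := tendsto_natCast_atTop_atTop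
  have hH : Tendsto (fun k : ℕ =>
      c ^ ((k:ℝ) + ν) * J k / Real.Gamma ((k:ℝ) + ν)) atTop (𝓝 1) := by
    apply tendsto_of_tendsto_of_tendsto_of_le_of_le' hL tendsto_const_nhds
    · filter_upwards [hnat.eventually_gt_atTop (2 - ν)] with k hk
      exact (hbound k hk).1
    · filter_upwards [hnat.eventually_gt_atTop (2 - ν)] with k hk
      exact (hbound k hk).2
  have hmain := hH.mul hG
  rw [mul_one] at hmain
  refine hmain.congr' ?_
  filter_upwards [hnat.eventually_gt_atTop (2 - ν), hnat.eventually_gt_atTop 0] with k hk hk0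
  have hkv : (0:ℝ) < (k:ℝ) + ν := by linarith
  have hfact : (0:ℝ) < ((Nat.factorial k : ℕ) : ℝ) := by positivity
  have hkpow : 0 < (k:ℝ) ^ (ν - 1) := Real.rpow_pos_of_pos hk0 _
  have hcν : 0 < c ^ ν := Real.rpow_pos_of_pos hc0 _
  have hck : 0 < c ^ (k:ℝ) := Real.rpow_pos_of_pos hc0 _
  have hΓ : 0 < Real.Gamma ((k:ℝ) + ν) := Real.Gamma_pos_of_pos hkv
  rw [hnum k, hden k, Real.rpow_neg hc0.le, Real.rpow_add hc0]
  field_simp
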